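/- Let A be a C*-algebra, let a, c be positive elements of A, and let 0 < δ < 1/2 be such that c is Cuntz subequivalent to (a − δ)_+. Then there exists a positive contraction b ∈ A such that b is Cuntz equivalent to a and c is Cuntz subequivalent to (b − 1/2)_+. -/

import Mathlib

/-!
STATEMENT 12: Let A be a C*-algebra, a, c positive elements of A, and 0 < δ < 1/2
with c ≾ (a − δ)₊.  Then there exists a positive contraction b ∈ A such that b is
Cuntz equivalent to a and c ≾ (b − 1/2)₊.
-/

open scoped ENNReal

noncomputable section

/-- Cuntz subequivalence of positive elements of a C*-algebra:
`a ≾ b` iff `a = lim_n xₙ * b * xₙ*` for some sequence `(xₙ)`. -/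
def CuntzSub {A : Type*} [NonUnitalCStarAlgebra A] (a b : A) : Prop :=
  ∃ x : ℕ → A, Filter.Tendsto (fun n => x n * b * star (x n)) Filter.atTop (nhds a)

/-- Cuntz equivalence. -/
def CuntzEquiv {A : Type*} [NonUnitalCStarAlgebra A] (a b : A) : Prop :=
  CuntzSub a b ∧ CuntzSub b a

/-- An element of a C*-algebra is positive iff it is of the form `y* * y`. -/
def IsPos {A : Type*} [NonUnitalCStarAlgebra A] (a : A) : Prop := ∃ y, a = star y * y

/-- The `ε`-cut-down `(a - ε)₊` of an element, obtained by applying the continuous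
functional calculus with the function `t ↦ max (t - ε) 0`. -/
def cutDown {A : Type*} [NonUnitalCStarAlgebra A] (a : A) (ε : ℝ) : A :=
  cfcₙ (fun t : ℝ => max (t - ε) 0) a

/-- Property (S) of Hjelmborg–Rørdam: for every positive `a` and every `ε > 0` there
are a positive `b` and an `x` with `a = x* x`, `b = x x*` and `‖a b‖ ≤ ε`.
(The element `b = x x*` is automatically positive.) -/
def PropertyS (A : Type*) [NonUnitalCStarAlgebra A] : Prop :=
  ∀ a : A, IsPos a → ∀ ε : ℝ, 0 < ε →
    ∃ b x : A, a = star x * x ∧ b = x * star x ∧ ‖a * b‖ ≤ ε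

section Aux

variable {A : Type*} [NonUnitalCStarAlgebra A]

/-- Transitivity of Cuntz subequivalence. -/
lemma cuntzSub_trans {c d e : A} (h1 : CuntzSub c d) (h2 : CuntzSub d e) : CuntzSub c e := by
  obtain ⟨x, hx⟩ := h1
  obtain ⟨y, hy⟩ := h2
  have key : ∀ n : ℕ, ∃ m : ℕ,
      dist (x n * (y m * e * star (y m)) * star (x n)) (x n * d * star (x n))
        < 1 / ((n : ℝ) + 1) := by
    intro n
    have h1 : Filter.Tendsto (fun m => x n * (y m * e * star (y m)) * star (x n))
        Filter.atTop (nhds (x n * d * star (x n))) :=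
      (hy.const_mul (x n)).mul_const (star (x n))
    have hpos : (0:ℝ) < 1 / ((n : ℝ) + 1) := by positivity
    obtain ⟨m, hm⟩ := Metric.tendsto_atTop.mp h1 _ hpos
    exact ⟨m, hm m le_rfl⟩
  choose m hm using key
  refine ⟨fun n => x n * y (m n), ?_⟩
  rw [tendsto_iff_dist_tendsto_zero]
  have hbound : ∀ n, dist (x n * y (m n) * e * star (x n * y (m n))) c ≤
      1 / ((n : ℝ) + 1) + dist (x n * d * star (x n)) c := by
    intro n
    calc dist (x n * y (m n) * e * star (x n * y (m n))) c
        ≤ dist (x n * y (m n) * e * star (x n * y (m n))) (x n * d * star (x n))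
          + dist (x n * d * star (x n)) c := dist_triangle _ _ _
      _ ≤ 1 / ((n : ℝ) + 1) + dist (x n * d * star (x n)) c := by
          have heq : x n * y (m n) * e * star (x n * y (m n))
              = x n * (y (m n) * e * star (y (m n))) * star (x n) := by
            simp only [star_mul, mul_assoc]
          rw [heq]
          exact add_le_add (hm n).le le_rfl
  refine squeeze_zero (fun n => dist_nonneg) hbound ?_
  have h0 : Filter.Tendsto (fun n : ℕ => 1 / ((n:ℝ) + 1)) Filter.atTop (nhds 0) :=
    tendsto_one_div_add_atTop_nhds_zero_nat
  have h1 : Filter.Tendsto (fun n => dist (x n * d * star (x n)) c) Filter.atTop (nhds 0) :=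
    tendsto_iff_dist_tendsto_zero.mp hx
  simpa using h0.add h1

/-- The key approximation lemma: if `f = q ^ 2 * g` on `[0, ∞)` for a continuous `q`,
then `cfcₙ f a ≾ cfcₙ g a` for a selfadjoint `a` with nonnegative quasispectrum. -/
lemma cuntzSub_cfcn (a : A) (hsa : IsSelfAdjoint a)
    (hspec : ∀ t ∈ quasispectrum ℝ a, 0 ≤ t) (f g q : ℝ → ℝ)
    (hf : Continuous f) (hg : Continuous g) (hq : Continuous q)
    (hf0 : f 0 = 0) (hg0 : g 0 = 0)
    (hfg : ∀ t, 0 ≤ t → f t = q t ^ 2 * g t) :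
    CuntzSub (cfcₙ f a) (cfcₙ g a) := by
  set s : ℕ → ℝ → ℝ := fun n t => min ((n + 1) * t) 1 * q t with hs
  have hscont : ∀ n, Continuous (s n) := fun n =>
    ((continuous_const.mul continuous_id).min continuous_const).mul hq
  have hs0 : ∀ n : ℕ, s n 0 = 0 := fun n => by simp [hs]
  refine ⟨fun n => cfcₙ (s n) a, ?_⟩
  have hstar : ∀ n, star (cfcₙ (s n) a) = cfcₙ (s n) a := fun n =>
    (IsSelfAdjoint.cfcₙ (f := s n) (a := a)).star_eq
  have hmul : ∀ n, cfcₙ (s n) a * cfcₙ g a * star (cfcₙ (s n) a)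
      = cfcₙ (fun t => s n t * g t * s n t) a := by
    intro n
    have e1 : cfcₙ (fun t => s n t * g t) a = cfcₙ (s n) a * cfcₙ g a :=
      cfcₙ_mul (s n) g a ((hscont n).continuousOn) (hs0 n) (hg.continuousOn) hg0
    have e2 : cfcₙ (fun t => s n t * g t * s n t) a
        = cfcₙ (fun t => s n t * g t) a * cfcₙ (s n) a :=
      cfcₙ_mul (fun t => s n t * g t) (s n) a
        (((hscont n).mul hg).continuousOn) (by simp [hs0 n, hg0])
        ((hscont n).continuousOn) (hs0 n)
    rw [hstar n, e2, e1]
  simp only [hmul]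
  rw [Metric.tendsto_atTop]
  intro ε hε
  obtain ⟨η, hη0, hη⟩ := Metric.continuous_iff.mp hf 0 (ε / 2) (by positivity)
  obtain ⟨N, hN⟩ := exists_nat_gt (1 / η)
  refine ⟨N, fun n hn => ?_⟩
  have hptwise : ∀ t ∈ quasispectrum ℝ a, ‖s n t * g t * s n t - f t‖ ≤ ε / 2 := by
    intro t ht
    have ht0 : 0 ≤ t := hspec t ht
    set μ : ℝ := min ((n + 1) * t) 1 with hμ
    have hμ0 : 0 ≤ μ := le_min (by positivity) one_pos.le
    have hμ1 : μ ≤ 1 := min_le_right _ _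
    have hkey : s n t * g t * s n t - f t = (μ ^ 2 - 1) * f t := by
      have h1 : s n t * g t * s n t = μ ^ 2 * (q t ^ 2 * g t) := by
        simp only [hs]; ring
      rw [h1, ← hfg t ht0]; ring
    rw [hkey]
    by_cases hcase : (1:ℝ) ≤ (n + 1) * t
    · have hμeq : μ = 1 := min_eq_right hcase
      rw [hμeq]
      norm_num
      positivity
    · push_neg at hcase
      have htlt : t < η := by
        have hn1 : (1:ℝ) / η < (n:ℝ) + 1 := by
          have : (N:ℝ) ≤ (n:ℝ) := Nat.cast_le.mpr hn
          linarith
        have hnpos : (0:ℝ) < (n:ℝ) + 1 := by positivity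
        by_contra hcon
        push_neg at hcon
        rw [div_lt_iff₀ hη0] at hn1
        have h2' : ((n:ℝ) + 1) * η ≤ ((n:ℝ) + 1) * t := mul_le_mul_of_nonneg_left hcon hnpos.le
        linarith
      have hft : |f t| < ε / 2 := by
        have := hη t (by rwa [Real.dist_eq, sub_zero, abs_of_nonneg ht0])
        rwa [Real.dist_eq, hf0, sub_zero] at this
      have habs : |μ ^ 2 - 1| ≤ 1 := by
        rw [abs_le]
        constructor <;> nlinarith
      calc ‖(μ ^ 2 - 1) * f t‖ = |μ ^ 2 - 1| * |f t| := abs_mul _ _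
        _ ≤ 1 * |f t| := by gcongr
        _ ≤ ε / 2 := by rw [one_mul]; exact hft.le
  have hd : dist (cfcₙ (fun t => s n t * g t * s n t) a) (cfcₙ f a) ≤ ε / 2 := by
    have e3 : cfcₙ (fun t => s n t * g t * s n t - f t) a
        = cfcₙ (fun t => s n t * g t * s n t) a - cfcₙ f a :=
      cfcₙ_sub (fun t => s n t * g t * s n t) f a
        ((((hscont n).mul hg).mul (hscont n)).continuousOn) (by simp [hs0 n, hg0])
        (hf.continuousOn) hf0
    rw [dist_eq_norm, ← e3]
    exact norm_cfcₙ_le hptwise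
  linarith

end Aux

/-- The auxiliary function `t ↦ min (t⁺ / (2δ)) 1`. -/
def auxG (δ : ℝ) : ℝ → ℝ := fun t => min (max t 0 / (2 * δ)) 1

lemma auxG_cont (δ : ℝ) : Continuous (auxG δ) :=
  ((continuous_id.max continuous_const).div_const _).min continuous_const

lemma auxG_zero (δ : ℝ) : auxG δ 0 = 0 := by simp [auxG]

lemma auxG_nonneg {δ : ℝ} (hδ : 0 < δ) (t : ℝ) : 0 ≤ auxG δ t :=
  le_min (by positivity) one_pos.le

lemma auxG_le_one (δ : ℝ) (t : ℝ) : auxG δ t ≤ 1 := min_le_right _ _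

lemma auxG_eq_div {δ t : ℝ} (hδ : 0 < δ) (ht : 0 ≤ t) (h : t ≤ 2 * δ) :
    auxG δ t = t / (2 * δ) := by
  rw [auxG, max_eq_left ht]
  exact min_eq_left (by rw [div_le_one (by linarith)]; exact h)

lemma auxG_eq_one {δ t : ℝ} (hδ : 0 < δ) (ht : 0 ≤ t) (h : 2 * δ ≤ t) :
    auxG δ t = 1 := by
  rw [auxG, max_eq_left ht]
  exact min_eq_right (by rw [le_div_iff₀ (by linarith)]; linarith)

/-- **Lemma: improving a cut-down to level 1/2.** -/
theorem exists_contraction_cutDown {A : Type*} [NonUnitalCStarAlgebra A]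
    (a c : A) (ha : IsPos a) (hc : IsPos c) (δ : ℝ) (hδ0 : 0 < δ) (hδ : δ < 1 / 2)
    (h : CuntzSub c (cutDown a δ)) :
    ∃ b : A, IsPos b ∧ ‖b‖ ≤ 1 ∧ CuntzEquiv b a ∧ CuntzSub c (cutDown b (1 / 2)) := by
  obtain ⟨y, hy⟩ := ha
  have hsa : IsSelfAdjoint a := hy ▸ IsSelfAdjoint.star_mul_self y
  have hspec : ∀ t ∈ quasispectrum ℝ a, 0 ≤ t := by
    intro t ht
    rw [Unitization.quasispectrum_eq_spectrum_inr' ℝ ℂ a, hy, Unitization.inr_mul,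
      Unitization.inr_star] at ht
    exact spectrum_star_mul_self_nonneg t ht
  have h2δ : (0:ℝ) < 2 * δ := by linarith
  have h2δ' : (2 * δ : ℝ) ≠ 0 := h2δ.ne'
  have hGcont : Continuous (auxG δ) := auxG_cont δ
  have hG0 : (auxG δ) 0 = 0 := auxG_zero δ
  refine ⟨cfcₙ (auxG δ) a, ?_, ?_, ⟨?_, ?_⟩, ?_⟩
  · -- IsPos
    refine ⟨cfcₙ (fun t => Real.sqrt ((auxG δ) t)) a, ?_⟩
    have hsq : Continuous fun t => Real.sqrt ((auxG δ) t) := Real.continuous_sqrt.comp hGcont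
    have hsq0 : Real.sqrt ((auxG δ) 0) = 0 := by simp [hG0]
    rw [(IsSelfAdjoint.cfcₙ (f := fun t => Real.sqrt ((auxG δ) t)) (a := a)).star_eq,
      ← cfcₙ_mul _ _ a (hsq.continuousOn) hsq0 (hsq.continuousOn) hsq0]
    exact cfcₙ_congr fun t _ => (Real.mul_self_sqrt (auxG_nonneg hδ0 t)).symm
  · -- norm ≤ 1
    refine norm_cfcₙ_le fun t _ => ?_
    rw [Real.norm_eq_abs, abs_of_nonneg (auxG_nonneg hδ0 t)]
    exact auxG_le_one δ t
  · -- b ≾ a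
    have key := cuntzSub_cfcn a hsa hspec (auxG δ) (fun t => t)
      (fun t => Real.sqrt (min (1 / (2 * δ)) (1 / max t (2 * δ))))
      hGcont continuous_id
      (Real.continuous_sqrt.comp (continuous_const.min
        (continuous_const.div (continuous_id.max continuous_const)
          fun t => by positivity)))
      hG0 rfl ?_
    · rwa [cfcₙ_id' ℝ a] at key
    · intro t ht
      have hmaxpos : 0 < max t (2 * δ) := lt_of_lt_of_le h2δ (le_max_right _ _)
      have hargpos : 0 ≤ min (1 / (2 * δ)) (1 / max t (2 * δ)) := by positivity
      rw [Real.sq_sqrt hargpos]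
      rcases le_total t (2 * δ) with hcase | hcase
      · rw [max_eq_right hcase, min_self, auxG_eq_div hδ0 ht hcase]
        ring
      · have htpos : 0 < t := lt_of_lt_of_le h2δ hcase
        rw [max_eq_left hcase,
          min_eq_right (one_div_le_one_div_of_le h2δ hcase),
          auxG_eq_one hδ0 ht hcase, one_div, inv_mul_cancel₀ htpos.ne']
  · -- a ≾ b
    have key := cuntzSub_cfcn a hsa hspec (fun t => t) (auxG δ)
      (fun t => Real.sqrt (max t (2 * δ)))
      continuous_id hGcont
      (Real.continuous_sqrt.comp (continuous_id.max continuous_const))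
      rfl hG0 ?_
    · rwa [cfcₙ_id' ℝ a] at key
    · intro t ht
      have hmaxpos : (0:ℝ) ≤ max t (2 * δ) := le_trans h2δ.le (le_max_right _ _)
      rw [Real.sq_sqrt hmaxpos]
      rcases le_total t (2 * δ) with hcase | hcase
      · rw [max_eq_right hcase, auxG_eq_div hδ0 ht hcase]
        field_simp
      · rw [max_eq_left hcase, auxG_eq_one hδ0 ht hcase, mul_one]
  · -- c ≾ (b - 1/2)₊
    have hcut : cutDown (cfcₙ (auxG δ) a) (1 / 2) = cfcₙ (fun t => max ((auxG δ) t - 1 / 2) 0) a := by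
      rw [cutDown, ← cfcₙ_comp (fun s : ℝ => max (s - 1/2) 0) (auxG δ) a
        ((continuous_id.sub continuous_const).max continuous_const).continuousOn
        (by norm_num) hGcont.continuousOn hG0 hsa]
      rfl
    rw [hcut]
    refine cuntzSub_trans h ?_
    rw [cutDown]
    refine cuntzSub_cfcn a hsa hspec (fun t => max (t - δ) 0)
      (fun t => max ((auxG δ) t - 1 / 2) 0)
      (fun t => Real.sqrt (2 * max δ (t - δ)))
      ((continuous_id.sub continuous_const).max continuous_const)
      ((hGcont.sub continuous_const).max continuous_const)
      (Real.continuous_sqrt.comp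
        (continuous_const.mul (continuous_const.max (continuous_id.sub continuous_const))))
      (by show max (0 - δ) 0 = 0; rw [zero_sub]; exact max_eq_right (neg_nonpos.mpr hδ0.le))
      (by show max (auxG δ 0 - 1 / 2) 0 = 0; rw [hG0]; norm_num) ?_
    intro t ht
    show max (t - δ) 0 = Real.sqrt (2 * max δ (t - δ)) ^ 2 * max (auxG δ t - 1 / 2) 0
    have hargpos : (0:ℝ) ≤ 2 * max δ (t - δ) := by
      have : (0:ℝ) ≤ max δ (t - δ) := le_trans hδ0.le (le_max_left _ _)
      linarith
    rw [Real.sq_sqrt hargpos]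
    rcases le_total t δ with hcase | hcase
    · have hL : max (t - δ) 0 = 0 := max_eq_right (by linarith)
      have hGt : (auxG δ) t ≤ 1 / 2 := by
        rcases le_total t 0 with ht0 | ht0
        · have : t = 0 := le_antisymm ht0 ht
          rw [this, hG0]; norm_num
        · rw [auxG_eq_div hδ0 ht0 (by linarith)]
          rw [div_le_iff₀ h2δ]
          nlinarith
      have hR : max ((auxG δ) t - 1 / 2) 0 = 0 := max_eq_right (by linarith)
      rw [hL, hR, mul_zero]
    · rcases le_total t (2 * δ) with hcase2 | hcase2
      · have hGt : (auxG δ) t = t / (2 * δ) := auxG_eq_div hδ0 ht hcase2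
        have hmax : max δ (t - δ) = δ := max_eq_left (by linarith)
        have hL : max (t - δ) 0 = t - δ := max_eq_left (by linarith)
        have hR : max ((auxG δ) t - 1 / 2) 0 = (auxG δ) t - 1 / 2 := by
          refine max_eq_left ?_
          rw [hGt, le_sub_iff_add_le, zero_add, le_div_iff₀ h2δ]
          linarith
        rw [hL, hR, hGt, hmax]
        field_simp
      · have hGt : (auxG δ) t = 1 := auxG_eq_one hδ0 ht hcase2
        have hmax : max δ (t - δ) = t - δ := max_eq_right (by linarith)
        have hL : max (t - δ) 0 = t - δ := max_eq_left (by linarith)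
        have hR : max ((auxG δ) t - 1 / 2) 0 = 1 / 2 := by rw [hGt]; norm_num
        rw [hL, hR, hmax]
        ring

end
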